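/- Let Λ be a commutative ring with (2g)! invertible and V = ⊕_{i=-g}^{g} V_i an sl₂-module as above. For each 0 ≤ n ≤ g and 0 ≤ i ≤ n, the submodules e^i(V_{-n}[f]) and f^{n-i}(V_n[e]) of V_{-n+2i} coincide. -/
import Mathlib

section auxsl2

variable {Λ : Type*} [CommRing Λ] {M : Type*} [AddCommGroup M] [Module Λ M]

lemma aux_nat_unit {g : ℕ} (hΛ : IsUnit ((Nat.factorial (2 * g) : Λ))) {k : ℕ}
    (h1 : 1 ≤ k) (h2 : k ≤ 2 * g) : IsUnit ((k : Λ)) :=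
  isUnit_of_dvd_unit (Nat.cast_dvd_cast (Nat.dvd_factorial h1 h2)) hΛ

lemma aux_mem_pow (V : ℤ → Submodule Λ M) (e : Module.End Λ M)
    (he : ∀ i : ℤ, ∀ v ∈ V i, e v ∈ V (i + 2)) {m : ℤ} {v : M}
    (hv : v ∈ V m) : ∀ k : ℕ, (e ^ k) v ∈ V (m + 2 * k)
  | 0 => by simpa using hv
  | (k + 1) => by
      have h1 := he _ _ (aux_mem_pow V e he hv k)
      have h2 : (e ^ (k + 1)) v = e ((e ^ k) v) := by
        rw [pow_succ', Module.End.mul_apply]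
      rw [h2]
      convert h1 using 2
      push_cast; ring

lemma aux_comm (V : ℤ → Submodule Λ M) (e h f : Module.End Λ M)
    (hh : ∀ i : ℤ, ∀ v ∈ V i, h v = i • v) (hefh : e * f - f * e = h)
    {j : ℤ} {w : M} (hw : w ∈ V j) : f (e w) = e (f w) - j • w := by
  have h1 := congrArg (fun φ : Module.End Λ M => φ w) hefh
  simp only [LinearMap.sub_apply, Module.End.mul_apply] at h1
  rw [hh j w hw] at h1
  rw [← h1]; abel

/-- Lowering identity: if `f v = 0` and `v ∈ V m`, then
`f (e^(k+1) v) = -((k+1)(m+k)) • e^k v`. -/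
lemma aux_lower (V : ℤ → Submodule Λ M) (e h f : Module.End Λ M)
    (he : ∀ i : ℤ, ∀ v ∈ V i, e v ∈ V (i + 2))
    (hh : ∀ i : ℤ, ∀ v ∈ V i, h v = i • v) (hefh : e * f - f * e = h)
    {m : ℤ} {v : M} (hv : v ∈ V m) (hfv : f v = 0) :
    ∀ k : ℕ, f ((e ^ (k + 1)) v) = (-(((k : ℤ) + 1) * (m + k))) • (e ^ k) v
  | 0 => by
      have h2 : (e ^ 1) v = e v := by simp
      have h3 : (e ^ 0) v = v := by simp
      rw [h2, h3, aux_comm V e h f hh hefh hv, hfv, map_zero, zero_sub,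
        show Neg.neg ((((0 : ℕ) : ℤ) + 1) * (m + ((0 : ℕ) : ℤ))) = -m by push_cast; ring,
        neg_smul]
  | (k + 1) => by
      have hmem : (e ^ (k + 1)) v ∈ V (m + 2 * ((k : ℤ) + 1)) := by
        have := aux_mem_pow V e he hv (k + 1)
        rwa [show (m + 2 * (((k + 1 : ℕ)) : ℤ)) = m + 2 * ((k : ℤ) + 1) by push_cast; ring]
          at this
      have h2 : (e ^ (k + 2)) v = e ((e ^ (k + 1)) v) := by
        rw [pow_succ', Module.End.mul_apply]
      rw [h2, aux_comm V e h f hh hefh hmem,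
        aux_lower V e h f he hh hefh hv hfv k, map_zsmul]
      have h3 : e ((e ^ k) v) = (e ^ (k + 1)) v := by
        rw [pow_succ', Module.End.mul_apply]
      rw [h3, ← sub_smul]
      congr 1
      push_cast; ring

/-- If `u ∈ V m` with `m ≥ 1` and `f u = 0`, then `u = 0`. -/
lemma aux_vanish {g : ℕ} (hg : 1 ≤ g) (hΛ : IsUnit ((Nat.factorial (2 * g) : Λ)))
    (V : ℤ → Submodule Λ M)
    (hbound : ∀ i : ℤ, (g : ℤ) < |i| → V i = ⊥)
    (e h f : Module.End Λ M)
    (he : ∀ i : ℤ, ∀ v ∈ V i, e v ∈ V (i + 2))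
    (hh : ∀ i : ℤ, ∀ v ∈ V i, h v = i • v)
    (hefh : e * f - f * e = h)
    {m : ℤ} (hm : 1 ≤ m) {u : M} (hu : u ∈ V m) (hfu : f u = 0) : u = 0 := by
  have step : ∀ k : ℕ, (e ^ (k + 1)) u = 0 → (e ^ k) u = 0 := by
    intro k hk
    by_cases hc : (g : ℤ) < m + 2 * k
    · have hmem : (e ^ k) u ∈ V (m + 2 * k) := aux_mem_pow V e he hu k
      rw [hbound _ (by rwa [abs_of_pos (by omega)])] at hmem
      simpa using hmem
    · push_neg at hc
      have hl := aux_lower V e h f he hh hefh hu hfu k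
      rw [hk, map_zero] at hl
      have hmk : (0 : ℤ) ≤ m + k := by omega
      have hunit1 : IsUnit (((k + 1 : ℕ) : Λ)) :=
        aux_nat_unit hΛ (by omega) (by omega)
      have hunit2 : IsUnit ((((m + k).toNat : ℕ) : Λ)) :=
        aux_nat_unit hΛ (by omega) (by omega)
      have key : IsUnit (((-(((k : ℤ) + 1) * (m + k)) : ℤ) : Λ)) := by
        have hrw : (-(((k : ℤ) + 1) * (m + k)) : ℤ)
            = -(((k + 1 : ℕ) : ℤ) * (((m + k).toNat : ℕ) : ℤ)) := by
          rw [Int.toNat_of_nonneg hmk]; push_cast; ring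
        rw [hrw]
        push_cast
        push_cast at hunit1 hunit2
        exact (hunit1.mul hunit2).neg
      have hsm : (((-(((k : ℤ) + 1) * (m + k)) : ℤ) : Λ)) • (e ^ k) u = 0 := by
        rw [Int.cast_smul_eq_zsmul]; exact hl.symm
      have := key
      calc (e ^ k) u
          = (↑key.unit⁻¹ : Λ) • ((((-(((k : ℤ) + 1) * (m + k)) : ℤ) : Λ)) • (e ^ k) u) := by
            rw [smul_smul, IsUnit.val_inv_mul, one_smul]
        _ = 0 := by rw [hsm, smul_zero]
  have top : (e ^ (g + 1)) u = 0 := by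
    have hmem : (e ^ (g + 1)) u ∈ V (m + 2 * (g + 1 : ℕ)) := aux_mem_pow V e he hu (g + 1)
    have hb : ((g : ℤ)) < |m + 2 * ((g : ℤ) + 1)| := by
      rw [abs_of_pos (by omega)]; omega
    rw [show (m + 2 * ((g + 1 : ℕ) : ℤ)) = m + 2 * ((g : ℤ) + 1) by push_cast; ring] at hmem
    rw [hbound _ hb] at hmem
    simpa using hmem
  have all : ∀ j : ℕ, (e ^ (g + 1 - j)) u = 0 := by
    intro j
    induction j with
    | zero => simpa using top
    | succ j ih =>
      rcases Nat.lt_or_ge j (g + 1) with hj | hj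
      · have hje : g + 1 - j = (g + 1 - (j + 1)) + 1 := by omega
        rw [hje] at ih
        exact step _ ih
      · have h0 : g + 1 - j = 0 := by omega
        have h1 : g + 1 - (j + 1) = 0 := by omega
        rw [h1, ← h0]; exact ih
  have := all (g + 1)
  simpa using this

/-- One inclusion of the main theorem. -/
lemma aux_key_le {g : ℕ} (hg : 1 ≤ g) (hΛ : IsUnit ((Nat.factorial (2 * g) : Λ)))
    (V : ℤ → Submodule Λ M)
    (hbound : ∀ i : ℤ, (g : ℤ) < |i| → V i = ⊥)
    (e h f : Module.End Λ M)
    (he : ∀ i : ℤ, ∀ v ∈ V i, e v ∈ V (i + 2))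
    (hh : ∀ i : ℤ, ∀ v ∈ V i, h v = i • v)
    (hefh : e * f - f * e = h)
    (n : ℕ) (hn : n ≤ g) (i : ℕ) (hi : i ≤ n) :
    Submodule.map (e ^ i) (V (-(n : ℤ)) ⊓ LinearMap.ker f) ≤
      Submodule.map (f ^ (n - i)) (V (n : ℤ) ⊓ LinearMap.ker e) := by
  rintro x ⟨v, hv', rfl⟩
  obtain ⟨hv, hfv'⟩ := Submodule.mem_inf.mp hv'
  have hfv : f v = 0 := LinearMap.mem_ker.mp hfv'
  set w := (e ^ n) v with hw_def
  have hw : w ∈ V (n : ℤ) := by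
    have := aux_mem_pow V e he hv n
    rw [show (-(n : ℤ) + 2 * n) = (n : ℤ) by ring] at this
    exact this
  have hew : e w = 0 := by
    have hmem : (e ^ (n + 1)) v ∈ V ((n : ℤ) + 2) := by
      have := aux_mem_pow V e he hv (n + 1)
      rw [show (-(n : ℤ) + 2 * ((n + 1 : ℕ) : ℤ)) = (n : ℤ) + 2 by push_cast; ring] at this
      exact this
    have hfz : f ((e ^ (n + 1)) v) = 0 := by
      rw [aux_lower V e h f he hh hefh hv hfv n,
        show (-(((n : ℤ) + 1) * (-(n : ℤ) + n))) = 0 by ring, zero_smul]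
    have hz := aux_vanish hg hΛ V hbound e h f he hh hefh
      (by omega : (1 : ℤ) ≤ (n : ℤ) + 2) hmem hfz
    rw [hw_def, ← Module.End.mul_apply, ← pow_succ']
    exact hz
  have claim : ∀ j : ℕ, j ≤ n → ∃ c : Λ, IsUnit c ∧ (f ^ j) w = c • (e ^ (n - j)) v := by
    intro j
    induction j with
    | zero => intro _; exact ⟨1, isUnit_one, by simp [hw_def]⟩
    | succ j ih =>
      intro hj1
      obtain ⟨c, hcu, hc⟩ := ih (by omega)
      have hnj : n - j = (n - (j + 1)) + 1 := by omega
      have hs : (f ^ (j + 1)) w = c • f ((e ^ ((n - (j + 1)) + 1)) v) := by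
        rw [pow_succ', Module.End.mul_apply, hc, map_smul, ← hnj]
      rw [aux_lower V e h f he hh hefh hv hfv (n - (j + 1))] at hs
      have hunit3 : IsUnit ((((n - j) * (j + 1) : ℕ) : Λ)) := by
        rw [Nat.cast_mul]
        exact (aux_nat_unit hΛ (k := n - j) (by omega) (by omega)).mul
          (aux_nat_unit hΛ (k := j + 1) (by omega) (by omega))
      refine ⟨c * (((n - j) * (j + 1) : ℕ) : Λ), hcu.mul hunit3, ?_⟩
      rw [hs, ← Int.cast_smul_eq_zsmul (R := Λ), smul_smul]
      congr 2
      push_cast [Nat.cast_sub (show j + 1 ≤ n from hj1), Nat.cast_sub (show j ≤ n by omega)]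
      ring
  obtain ⟨c, hcu, hc⟩ := claim (n - i) (by omega)
  rw [show n - (n - i) = i by omega] at hc
  refine ⟨(↑hcu.unit⁻¹ : Λ) • w, Submodule.mem_inf.mpr
    ⟨Submodule.smul_mem _ _ hw, LinearMap.mem_ker.mpr (by rw [map_smul, hew, smul_zero])⟩, ?_⟩
  rw [map_smul, hc, smul_smul, IsUnit.val_inv_mul, one_smul]

end auxsl2

theorem stmt_19 (Λ : Type*) [CommRing Λ] (g : ℕ) (hg : 1 ≤ g)
    (hΛ : IsUnit ((Nat.factorial (2 * g) : Λ)))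
    (M : Type*) [AddCommGroup M] [Module Λ M]
    (V : ℤ → Submodule Λ M)
    (hdirect : DirectSum.IsInternal V)
    (hbound : ∀ i : ℤ, (g : ℤ) < |i| → V i = ⊥)
    (e h f : Module.End Λ M)
    (he : ∀ i : ℤ, ∀ v ∈ V i, e v ∈ V (i + 2))
    (hf : ∀ i : ℤ, ∀ v ∈ V i, f v ∈ V (i - 2))
    (hh : ∀ i : ℤ, ∀ v ∈ V i, h v = i • v)
    (hefh : e * f - f * e = h)
    (n : ℕ) (hn : n ≤ g) (i : ℕ) (hi : i ≤ n) :
    Submodule.map (e ^ i) (V (-(n : ℤ)) ⊓ LinearMap.ker f) =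
      Submodule.map (f ^ (n - i)) (V (n : ℤ) ⊓ LinearMap.ker e) := by
  refine le_antisymm (aux_key_le hg hΛ V hbound e h f he hh hefh n hn i hi) ?_
  -- apply the one-sided lemma to the "reversed" data
  have hbound' : ∀ j : ℤ, (g : ℤ) < |j| → V (-j) = ⊥ := by
    intro j hj
    exact hbound (-j) (by rwa [abs_neg])
  have he' : ∀ j : ℤ, ∀ v ∈ V (-j), f v ∈ V (-(j + 2)) := by
    intro j v hv
    have := hf (-j) v hv
    rwa [show (-j - 2) = -(j + 2) by ring] at this
  have hh' : ∀ j : ℤ, ∀ v ∈ V (-j), (-h) v = j • v := by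
    intro j v hv
    rw [LinearMap.neg_apply, hh (-j) v hv, neg_smul, neg_neg]
  have hefh' : f * e - e * f = -h := by
    rw [← hefh, neg_sub]
  have hswap := aux_key_le hg hΛ (fun j => V (-j)) hbound' f (-h) e he' hh' hefh'
    n hn (n - i) (by omega)
  simp only [neg_neg] at hswap
  rw [show n - (n - i) = i by omega] at hswap
  exact hswap
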